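/- Let i be a positive integer and let h denote coefficients in the Hirzebruch L-polynomials. Then 2·h_{i,i} + h_{2i} = h_i², where h_{i,i} is the coefficient of p_i² in L_{2i}. -/

import Mathlib

open MvPolynomial

noncomputable section

/-- The total Pontryagin-class variable of the first factor: `p'_k`,
with `p'_0 = 1`.  Variables are indexed by positive integers `k`. -/
def pFst (k : ℕ) : MvPolynomial (ℕ ⊕ ℕ) ℚ := if k = 0 then 1 else X (Sum.inl k)

/-- `p''_k` for the second factor, with `p''_0 = 1`. -/
def pSnd (k : ℕ) : MvPolynomial (ℕ ⊕ ℕ) ℚ := if k = 0 then 1 else X (Sum.inr k)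

/-- The `k`-th Pontryagin class of a product, via the Whitney formula:
`p_k = ∑_{a+b=k} p'_a p''_b`. -/
def pProd (k : ℕ) : MvPolynomial (ℕ ⊕ ℕ) ℚ :=
  ∑ a ∈ Finset.range (k + 1), pFst a * pSnd (k - a)

/-- A multiplicative sequence of polynomials `L_n` in the variables
`p_1, p_2, …` (variable `k ≥ 1` of `MvPolynomial ℕ ℚ` stands for `p_k`;
variable `0` is unused): `L_0 = 1`, each `L_n` is homogeneous of weighted
degree `n` (where `p_k` has weight `k`), and the sequence satisfies
`L_n(p(ξ×η)) = ∑_{i+j=n} L_i(p(ξ)) L_j(p(η))`.  The Hirzebruch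
`L`-polynomials (associated to `√t/tanh √t`) form such a sequence. -/
def IsMultiplicativeSeq (L : ℕ → MvPolynomial ℕ ℚ) : Prop :=
  L 0 = 1 ∧
  (∀ n d, coeff d (L n) ≠ 0 → d 0 = 0) ∧
  (∀ n d, coeff d (L n) ≠ 0 → (d.sum fun k e => k * e) = n) ∧
  (∀ n, aeval pProd (L n) =
    ∑ i ∈ Finset.range (n + 1), aeval pFst (L i) * aeval pSnd (L (n - i)))

/-- `h_i`: the coefficient of `p_i` in `L_i`. -/
def h1 (L : ℕ → MvPolynomial ℕ ℚ) (i : ℕ) : ℚ :=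
  coeff (Finsupp.single i 1) (L i)

/-- `h_{i,j}`: the coefficient of `p_i p_j` in `L_{i+j}` (of `p_i²` in `L_{2i}` if `i = j`). -/
def h2 (L : ℕ → MvPolynomial ℕ ℚ) (i j : ℕ) : ℚ :=
  coeff (Finsupp.single i 1 + Finsupp.single j 1) (L (i + j))

/-- `h_{i,j,k}`: the coefficient of `p_i p_j p_k` in `L_{i+j+k}`. -/
def h3 (L : ℕ → MvPolynomial ℕ ℚ) (i j k : ℕ) : ℚ :=
  coeff (Finsupp.single i 1 + Finsupp.single j 1 + Finsupp.single k 1) (L (i + j + k))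

end

noncomputable section Aux
open MvPolynomial Finsupp

/-- substitution target for the two factors -/
def V (b : Bool) (i : ℕ) : ℕ → MvPolynomial Bool ℚ :=
  fun k => if k = 0 then 1 else if k = i then X b else 0

def W (i : ℕ) : ℕ → MvPolynomial Bool ℚ :=
  fun k => if k = 0 then 1 else if k = i then X false + X true else
    if k = 2 * i then X false * X true else 0

lemma coeff_aeval_sum (g : ℕ → MvPolynomial Bool ℚ) (P : MvPolynomial ℕ ℚ) (u : Bool →₀ ℕ) :
    coeff u (aeval g P) =
      ∑ d ∈ P.support, coeff d P * coeff u (∏ k ∈ d.support, g k ^ d k) := by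
  rw [aeval_def, eval₂_eq, coeff_sum]
  simp [algebraMap_eq, coeff_C_mul]

lemma coeff_aeval_eq_sum_subset (g : ℕ → MvPolynomial Bool ℚ) (P : MvPolynomial ℕ ℚ)
    (u : Bool →₀ ℕ) (T : Finset (ℕ →₀ ℕ))
    (h : ∀ d : ℕ →₀ ℕ, coeff d P ≠ 0 → d ∉ T →
      coeff u (∏ k ∈ d.support, g k ^ d k) = 0) :
    coeff u (aeval g P) = ∑ d ∈ T, coeff d P * coeff u (∏ k ∈ d.support, g k ^ d k) := by
  rw [coeff_aeval_sum]
  have h1 : ∑ d ∈ P.support, coeff d P * coeff u (∏ k ∈ d.support, g k ^ d k)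
      = ∑ d ∈ P.support ∪ T, coeff d P * coeff u (∏ k ∈ d.support, g k ^ d k) :=
    Finset.sum_subset Finset.subset_union_left (fun d _ hd => by
      rw [MvPolynomial.notMem_support_iff.mp hd, zero_mul])
  have h2 : ∑ d ∈ T, coeff d P * coeff u (∏ k ∈ d.support, g k ^ d k)
      = ∑ d ∈ P.support ∪ T, coeff d P * coeff u (∏ k ∈ d.support, g k ^ d k) :=
    Finset.sum_subset Finset.subset_union_right (fun d hd hdT => by
      rcases Finset.mem_union.mp hd with hs | hs
      · rw [h d (MvPolynomial.mem_support_iff.mp hs) hdT, mul_zero]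
      · exact absurd hs hdT)
  rw [h1, ← h2]
lemma prodV_shape (b : Bool) (i : ℕ) (d : ℕ →₀ ℕ) :
    ∃ (c : ℚ) (N : ℕ), ∏ k ∈ d.support, (V b i) k ^ d k = C c * X b ^ N := by
  classical
  refine Finset.prod_induction _ (fun Q => ∃ (c : ℚ) (N : ℕ), Q = C c * X b ^ N)
    ?_ ⟨1, 0, by simp⟩ ?_
  · rintro x y ⟨c, N, rfl⟩ ⟨c', N', rfl⟩
    exact ⟨c * c', N + N', by rw [map_mul]; ring⟩
  · intro k _
    by_cases h0 : k = 0
    · exact ⟨1, 0, by simp [V, h0]⟩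
    by_cases h1 : k = i
    · subst h1; exact ⟨1, d k, by simp [V, h0]⟩
    · by_cases h2 : d k = 0
      · exact ⟨1, 0, by simp [h2]⟩
      · exact ⟨0, 0, by simp [V, h0, h1, zero_pow h2]⟩

lemma coeff_aevalV_supported (b : Bool) (i : ℕ) (P : MvPolynomial ℕ ℚ) (u : Bool →₀ ℕ)
    (hu : u (!b) ≠ 0) : coeff u (aeval (V b i) P) = 0 := by
  rw [coeff_aeval_sum]
  refine Finset.sum_eq_zero fun d _ => ?_
  obtain ⟨c, N, hc⟩ := prodV_shape b i d
  rw [hc, coeff_C_mul, X_pow_eq_monomial, coeff_monomial]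
  have hne : (Finsupp.single b N) ≠ u := by
    intro h
    apply hu
    rw [← h, Finsupp.single_apply]
    simp
  simp [hne]
/-- The main computation for one factor. -/
lemma coeff_single_aevalV (b : Bool) (i : ℕ) (hi : 0 < i) (P : MvPolynomial ℕ ℚ) (j : ℕ)
    (h0 : ∀ d, coeff d P ≠ 0 → d 0 = 0)
    (hw : ∀ d, coeff d P ≠ 0 → (d.sum fun k e => k * e) = j) :
    coeff (Finsupp.single b 1) (aeval (V b i) P) =
      if j = i then coeff (Finsupp.single i 1) P else 0 := by
  classical
  have hvan : ∀ d : ℕ →₀ ℕ, coeff d P ≠ 0 → d ≠ Finsupp.single i 1 →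
      coeff (Finsupp.single b 1) (∏ k ∈ d.support, (V b i) k ^ d k) = 0 := by
    intro d hd hne
    by_cases hsub : ∀ k ∈ d.support, k = i
    · have hdd : d = Finsupp.single i (d i) := by
        ext k
        by_cases hk : k = i
        · subst hk; simp
        · have hks : k ∉ d.support := fun hks => hk (hsub k hks)
          rw [Finsupp.notMem_support_iff.mp hks, Finsupp.single_apply,
            if_neg (fun h => hk h.symm)]
      have hwj : i * d i = j := by
        have hww := hw d hd
        rw [hdd, Finsupp.sum_single_index (mul_zero i)] at hww
        exact hww
      by_cases ha : d i = 0
      · have hdz : d = 0 := by rw [hdd, ha, Finsupp.single_zero]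
        rw [hdz]
        simp only [Finsupp.support_zero, Finset.prod_empty, MvPolynomial.coeff_one]
        rw [if_neg (fun h => one_ne_zero (Finsupp.single_eq_zero.mp h.symm))]
      · have hsup : d.support = {i} := by rw [hdd]; exact Finsupp.support_single_ne_zero _ ha
        have hprod : ∏ k ∈ d.support, (V b i) k ^ d k = X b ^ d i := by
          rw [hsup, Finset.prod_singleton]
          simp [V, hi.ne']
        rw [hprod, MvPolynomial.coeff_single_X_pow]
        have h1 : d i ≠ 1 := fun h => hne (by rw [hdd, h])
        simp [h1, ha]
    · push_neg at hsub
      obtain ⟨k, hks, hki⟩ := hsub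
      have hk0 : k ≠ 0 := by
        intro h; subst h; exact absurd (h0 d hd) (Finsupp.mem_support_iff.mp hks)
      have hz : (V b i) k ^ d k = 0 := by
        simp [V, hk0, hki, zero_pow (Finsupp.mem_support_iff.mp hks)]
      rw [Finset.prod_eq_zero hks hz, MvPolynomial.coeff_zero]
  by_cases hji : j = i
  · rw [coeff_aeval_eq_sum_subset _ _ _ {Finsupp.single i 1}
      (fun d hd hdT => hvan d hd (by simpa using hdT)), Finset.sum_singleton]
    rw [Finsupp.support_single_ne_zero _ one_ne_zero, Finset.prod_singleton]
    simp [V, hi.ne', hji, MvPolynomial.coeff_single_X_pow]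
  · rw [coeff_aeval_eq_sum_subset _ _ _ ∅ (fun d hd _ => ?_), Finset.sum_empty, if_neg hji]
    by_cases hdi : d = Finsupp.single i 1
    · exfalso
      have hww := hw d hd
      rw [hdi, Finsupp.sum_single_index (mul_zero i), mul_one] at hww
      exact hji hww.symm
    · exact hvan d hd hdi
def u0 (i : ℕ) : ℕ ⊕ ℕ → MvPolynomial Bool ℚ := Sum.elim (V false i) (V true i)

lemma aeval_u0_pFst (i k : ℕ) : aeval (u0 i) (pFst k) = V false i k := by
  by_cases h : k = 0 <;> simp [pFst, V, u0, h]

lemma aeval_u0_pSnd (i k : ℕ) : aeval (u0 i) (pSnd k) = V true i k := by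
  by_cases h : k = 0 <;> simp [pSnd, V, u0, h]

lemma aeval_u0_pProd (i : ℕ) (hi : 0 < i) (k : ℕ) : aeval (u0 i) (pProd k) = W i k := by
  rw [pProd, map_sum]
  simp only [map_mul, aeval_u0_pFst, aeval_u0_pSnd]
  by_cases hk0 : k = 0
  · subst hk0; simp [V, W]
  by_cases hki : k = i
  · subst hki
    have hsub : ({0, k} : Finset ℕ) ⊆ Finset.range (k + 1) := by
      intro x hx
      rcases Finset.mem_insert.mp hx with rfl | hx
      · simp
      · simp only [Finset.mem_singleton] at hx; subst hx; simp
    have hz : ∀ x ∈ Finset.range (k + 1), x ∉ ({0, k} : Finset ℕ) →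
        V false k x * V true k (k - x) = 0 := by
      intro x _ hxn
      simp only [Finset.mem_insert, Finset.mem_singleton, not_or] at hxn
      simp [V, hxn.1, hxn.2]
    rw [← Finset.sum_subset hsub hz, Finset.sum_pair (fun h => hk0 h.symm)]
    simp [V, W, hk0, add_comm]
  by_cases hk2 : k = 2 * i
  · subst hk2
    have hsub : ({i} : Finset ℕ) ⊆ Finset.range (2 * i + 1) := by
      intro x hx
      simp only [Finset.mem_singleton] at hx; subst hx
      simp only [Finset.mem_range]; omega
    have hz : ∀ x ∈ Finset.range (2 * i + 1), x ∉ ({i} : Finset ℕ) →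
        V false i x * V true i (2 * i - x) = 0 := by
      intro x _ hxn
      simp only [Finset.mem_singleton] at hxn
      by_cases hx0 : x = 0
      · subst hx0
        have h1 : 2 * i ≠ 0 := by omega
        have h3 : 2 * i ≠ i := by omega
        simp [V, h1, h3]
      · simp [V, hx0, hxn]
    rw [← Finset.sum_subset hsub hz, Finset.sum_singleton]
    have h1 : 2 * i - i = i := by omega
    have h2 : 2 * i ≠ 0 := by omega
    have h3 : 2 * i ≠ i := by omega
    simp [V, W, hi.ne', h1, h2, h3]
  · rw [W]
    simp only [if_neg hk0, if_neg hki, if_neg hk2]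
    refine Finset.sum_eq_zero fun a ha => ?_
    have hak : a ≤ k := by
      simp only [Finset.mem_range] at ha; omega
    by_cases ha0 : a = 0
    · subst ha0
      simp only [Nat.sub_zero]
      simp [V, hk0, hki]
    by_cases hai : a = i
    · subst hai
      have hx0 : k - a ≠ 0 := by omega
      have hxi : k - a ≠ a := by omega
      simp [V, hx0, hxi]
    · simp [V, ha0, hai]
lemma coeff_XfXt :
    coeff (Finsupp.single false 1 + Finsupp.single true 1)
      ((X false : MvPolynomial Bool ℚ) * X true) = 1 := by
  rw [X, X, monomial_mul, coeff_monomial, if_pos rfl, one_mul]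

lemma coeff_sq :
    coeff (Finsupp.single false 1 + Finsupp.single true 1)
      (((X false : MvPolynomial Bool ℚ) + X true) ^ 2) = 2 := by
  have he : ((X false : MvPolynomial Bool ℚ) + X true) ^ 2
      = X false * X false + (X false * X true + (X false * X true + X true * X true)) := by
    ring
  have h1 : ¬(Finsupp.single false 1 + Finsupp.single false 1
      = Finsupp.single false 1 + Finsupp.single true 1) := by
    intro h
    have := DFunLike.congr_fun h true
    simp [Finsupp.single_apply] at this
  have h2 : ¬(Finsupp.single true 1 + Finsupp.single true 1
      = Finsupp.single false 1 + Finsupp.single true 1) := by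
    intro h
    have := DFunLike.congr_fun h false
    simp [Finsupp.single_apply] at this
  have hf : coeff (Finsupp.single false 1 + Finsupp.single true 1)
      ((X false : MvPolynomial Bool ℚ) * X false) = 0 := by
    rw [X, monomial_mul, coeff_monomial, if_neg h1]
  have ht : coeff (Finsupp.single false 1 + Finsupp.single true 1)
      ((X true : MvPolynomial Bool ℚ) * X true) = 0 := by
    rw [X, monomial_mul, coeff_monomial, if_neg h2]
  rw [he, coeff_add, coeff_add, coeff_add, coeff_XfXt, hf, ht]
  norm_num
lemma coeff_aevalW (i : ℕ) (hi : 0 < i) (P : MvPolynomial ℕ ℚ)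
    (h0 : ∀ d, coeff d P ≠ 0 → d 0 = 0)
    (hw : ∀ d, coeff d P ≠ 0 → (d.sum fun k e => k * e) = 2 * i) :
    coeff (Finsupp.single false 1 + Finsupp.single true 1) (aeval (W i) P)
      = 2 * coeff (Finsupp.single i 2) P + coeff (Finsupp.single (2 * i) 1) P := by
  classical
  set d₁ : ℕ →₀ ℕ := Finsupp.single i 2 with hd₁
  set d₂ : ℕ →₀ ℕ := Finsupp.single (2 * i) 1 with hd₂
  have h2i0 : 2 * i ≠ 0 := by omega
  have h2ii : 2 * i ≠ i := by omega
  have hvan : ∀ d : ℕ →₀ ℕ, coeff d P ≠ 0 → d ∉ ({d₁, d₂} : Finset (ℕ →₀ ℕ)) →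
      coeff (Finsupp.single false 1 + Finsupp.single true 1)
        (∏ k ∈ d.support, (W i) k ^ d k) = 0 := by
    intro d hd hne
    simp only [Finset.mem_insert, Finset.mem_singleton, not_or] at hne
    by_cases hsub : ∀ k ∈ d.support, k = i ∨ k = 2 * i
    · exfalso
      have hdd : d = Finsupp.single i (d i) + Finsupp.single (2 * i) (d (2 * i)) := by
        ext k
        rw [Finsupp.add_apply, Finsupp.single_apply, Finsupp.single_apply]
        by_cases hk1 : k = i
        · subst hk1; rw [if_pos rfl, if_neg h2ii, add_zero]
        by_cases hk2 : k = 2 * i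
        · subst hk2; rw [if_pos rfl, if_neg (fun h => h2ii h.symm), zero_add]
        · rw [if_neg (fun h => hk1 h.symm), if_neg (fun h => hk2 h.symm), add_zero]
          exact Finsupp.notMem_support_iff.mp
            (fun hks => (hsub k hks).elim hk1 hk2)
      have hwd := hw d hd
      rw [hdd, Finsupp.sum_add_index' (fun a => mul_zero a) (fun a b c => mul_add a b c),
        Finsupp.sum_single_index (mul_zero i), Finsupp.sum_single_index (mul_zero (2 * i))] at hwd
      have hab : i * (d i + 2 * d (2 * i)) = i * 2 := by ring_nf; ring_nf at hwd; omega
      have hab2 : d i + 2 * d (2 * i) = 2 := Nat.eq_of_mul_eq_mul_left hi hab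
      have : (d i = 2 ∧ d (2 * i) = 0) ∨ (d i = 0 ∧ d (2 * i) = 1) := by omega
      rcases this with ⟨ha, hb⟩ | ⟨ha, hb⟩
      · exact hne.1 (by rw [hdd, ha, hb, Finsupp.single_zero, add_zero])
      · exact hne.2 (by rw [hdd, ha, hb, Finsupp.single_zero, zero_add])
    · push_neg at hsub
      obtain ⟨k, hks, hki, hki2⟩ := hsub
      have hk0 : k ≠ 0 := by
        intro h; subst h; exact absurd (h0 d hd) (Finsupp.mem_support_iff.mp hks)
      have hz : (W i) k ^ d k = 0 := by
        simp [W, hk0, hki, hki2, zero_pow (Finsupp.mem_support_iff.mp hks)]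
      rw [Finset.prod_eq_zero hks hz, MvPolynomial.coeff_zero]
  rw [coeff_aeval_eq_sum_subset _ _ _ {d₁, d₂} hvan]
  have hd12 : d₁ ≠ d₂ := by
    intro h
    have := DFunLike.congr_fun h i
    simp [hd₁, hd₂, Finsupp.single_apply, h2ii] at this
  rw [Finset.sum_pair hd12]
  have hp1 : (∏ k ∈ d₁.support, (W i) k ^ d₁ k) = (X false + X true) ^ 2 := by
    rw [hd₁, Finsupp.support_single_ne_zero _ (two_ne_zero), Finset.prod_singleton]
    simp [W, hi.ne']
  have hp2 : (∏ k ∈ d₂.support, (W i) k ^ d₂ k) = X false * X true := by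
    rw [hd₂, Finsupp.support_single_ne_zero _ (one_ne_zero), Finset.prod_singleton]
    simp [W, h2i0, h2ii]
  rw [hp1, hp2, coeff_sq, coeff_XfXt]
  ring
lemma coeff_mul_split (A B : MvPolynomial Bool ℚ)
    (hA : ∀ u : Bool →₀ ℕ, u true ≠ 0 → coeff u A = 0)
    (hB : ∀ v : Bool →₀ ℕ, v false ≠ 0 → coeff v B = 0) :
    coeff (Finsupp.single false 1 + Finsupp.single true 1) (A * B)
      = coeff (Finsupp.single false 1) A * coeff (Finsupp.single true 1) B := by
  classical
  rw [coeff_mul]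
  apply Finset.sum_eq_single_of_mem (Finsupp.single false 1, Finsupp.single true 1)
  · rw [Finset.HasAntidiagonal.mem_antidiagonal]
  · intro uv huv hne
    have hsum := Finset.HasAntidiagonal.mem_antidiagonal.mp huv
    have hfa := DFunLike.congr_fun hsum false
    have htr := DFunLike.congr_fun hsum true
    simp [Finsupp.single_apply] at hfa htr
    by_cases hu : uv.1 true = 0
    · by_cases hv : uv.2 false = 0
      · exfalso
        apply hne
        have hu1 : uv.1 = Finsupp.single false 1 := by
          ext b; cases b
          · simp [Finsupp.single_apply]; omega
          · simp [Finsupp.single_apply, hu]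
        have hu2 : uv.2 = Finsupp.single true 1 := by
          ext b; cases b
          · simp [Finsupp.single_apply, hv]
          · simp [Finsupp.single_apply]; omega
        exact Prod.ext hu1 hu2
      · rw [hB _ hv, mul_zero]
    · rw [hA _ hu, zero_mul]
end Aux

theorem two_h2_add_h1' (L : ℕ → MvPolynomial ℕ ℚ) (hL : IsMultiplicativeSeq L)
    (i : ℕ) (hi : 0 < i) :
    2 * h2 L i i + h1 L (2 * i) = (h1 L i) ^ 2 := by
  classical
  obtain ⟨hL0, hLz, hLw, hLm⟩ := hL
  have hmul := hLm (2 * i)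
  have happ := congrArg (aeval (u0 i)) hmul
  rw [show (aeval (u0 i)) ((aeval pProd) (L (2 * i)))
      = ((aeval (u0 i)).comp (aeval pProd)) (L (2 * i)) from rfl, comp_aeval] at happ
  have hWfun : (fun k => aeval (u0 i) (pProd k)) = W i := funext (aeval_u0_pProd i hi)
  rw [hWfun, map_sum] at happ
  simp only [map_mul] at happ
  have hF : ∀ j, aeval (u0 i) (aeval pFst (L j)) = aeval (V false i) (L j) := by
    intro j
    rw [show (aeval (u0 i)) ((aeval pFst) (L j))
        = ((aeval (u0 i)).comp (aeval pFst)) (L j) from rfl, comp_aeval]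
    rw [show (fun k => aeval (u0 i) (pFst k)) = V false i from funext (aeval_u0_pFst i)]
  have hS : ∀ j, aeval (u0 i) (aeval pSnd (L j)) = aeval (V true i) (L j) := by
    intro j
    rw [show (aeval (u0 i)) ((aeval pSnd) (L j))
        = ((aeval (u0 i)).comp (aeval pSnd)) (L j) from rfl, comp_aeval]
    rw [show (fun k => aeval (u0 i) (pSnd k)) = V true i from funext (aeval_u0_pSnd i)]
  simp only [hF, hS] at happ
  have hco := congrArg (coeff (Finsupp.single false 1 + Finsupp.single true 1)) happ
  rw [coeff_aevalW i hi _ (hLz (2 * i)) (hLw (2 * i)), coeff_sum] at hco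
  have hterm : ∀ j ∈ Finset.range (2 * i + 1),
      coeff (Finsupp.single false 1 + Finsupp.single true 1)
        (aeval (V false i) (L j) * aeval (V true i) (L (2 * i - j)))
      = (if j = i then h1 L i else 0) * (if 2 * i - j = i then h1 L i else 0) := by
    intro j _
    rw [coeff_mul_split _ _
      (fun u hu => coeff_aevalV_supported false i (L j) u (by simpa using hu))
      (fun v hv => coeff_aevalV_supported true i (L (2 * i - j)) v (by simpa using hv))]
    rw [coeff_single_aevalV false i hi (L j) j (hLz j) (hLw j),
      coeff_single_aevalV true i hi (L (2 * i - j)) (2 * i - j)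
        (hLz (2 * i - j)) (hLw (2 * i - j))]
    congr 1
    · by_cases h : j = i
      · subst h; simp [h1]
      · simp [h]
    · by_cases h : 2 * i - j = i
      · rw [if_pos h, if_pos h, h, h1]
      · simp [h]
  rw [Finset.sum_congr rfl hterm] at hco
  rw [Finset.sum_eq_single_of_mem i (by simp [Finset.mem_range]; omega)
    (fun j _ hj => by rw [if_neg hj, zero_mul])] at hco
  have h2i : 2 * i - i = i := by omega
  rw [if_pos rfl, if_pos h2i] at hco
  have hgoal : 2 * coeff (Finsupp.single i 2) (L (2 * i))
      + coeff (Finsupp.single (2 * i) 1) (L (2 * i)) = h1 L i * h1 L i := hco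
  rw [h2, h1, sq]
  rw [show i + i = 2 * i from (two_mul i).symm,
    show Finsupp.single i 1 + Finsupp.single i 1 = Finsupp.single i 2 from
      (Finsupp.single_add i 1 1).symm]
  exact hgoal

/-- For a positive integer `i`, the coefficients of the Hirzebruch
`L`-polynomials (or of any multiplicative sequence) satisfy
`2·h_{i,i} + h_{2i} = h_i²`, where `h_{i,i}` is the coefficient of `p_i²` in `L_{2i}`. -/
theorem two_h2_add_h1 (L : ℕ → MvPolynomial ℕ ℚ) (hL : IsMultiplicativeSeq L)
    (i : ℕ) (hi : 0 < i) :
    2 * h2 L i i + h1 L (2 * i) = (h1 L i) ^ 2 := by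
  exact two_h2_add_h1' L hL i hi
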